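/- Discrete optimization identity: Fix 0 < c_1 ≤ c_2 and N ∈ ℕ, N ≥ 1, and set r = 1 − c_1/c_2. Then the infimum of ∑_{n=0}^{N−1} (c_1 a_n + c_2 (a_{n+1} − a_n))² over all real sequences a_0, …, a_N with a_0 = 0 and a_N = 1 equals c_2² (1 − r²)/(1 − r^{2N}). -/

import Mathlib

open MeasureTheory Real

/-- Discrete LQR identity: for `0 < c₁ ≤ c₂`, `N ≥ 1`, and `r = 1 − c₁/c₂`, the infimum of
`∑_{n=0}^{N−1} (c₁ aₙ + c₂ (a_{n+1} − aₙ))²` over sequences with `a₀ = 0`, `a_N = 1`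
equals `c₂² (1 − r²)/(1 − r^{2N})`. -/
theorem discrete_lqr_identity (c₁ c₂ : ℝ) (h₁ : 0 < c₁) (h₁₂ : c₁ ≤ c₂) (N : ℕ) (hN : 1 ≤ N) :
    sInf {S : ℝ | ∃ a : ℕ → ℝ, a 0 = 0 ∧ a N = 1 ∧
        S = ∑ n ∈ Finset.range N, (c₁ * a n + c₂ * (a (n + 1) - a n)) ^ 2}
      = c₂ ^ 2 * (1 - (1 - c₁ / c₂) ^ 2) / (1 - (1 - c₁ / c₂) ^ (2 * N)) := by
  have hc₂ : 0 < c₂ := h₁.trans_le h₁₂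
  set r : ℝ := 1 - c₁ / c₂ with hr
  have hdiv : c₁ / c₂ ≤ 1 := (div_le_one hc₂).mpr h₁₂
  have hdiv' : 0 < c₁ / c₂ := div_pos h₁ hc₂
  have hr0 : 0 ≤ r := by rw [hr]; linarith
  have hr1 : r < 1 := by rw [hr]; linarith
  -- weights
  set W : ℝ := ∑ n ∈ Finset.range N, (r ^ (N - 1 - n)) ^ 2 with hWdef
  have hWgeom : W = ∑ k ∈ Finset.range N, (r ^ 2) ^ k := by
    rw [hWdef, ← Finset.sum_range_reflect (fun k => (r ^ 2) ^ k) N]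
    exact Finset.sum_congr rfl fun n _ => by rw [← pow_mul, ← pow_mul, Nat.mul_comm]
  have hW1 : (1 : ℝ) ≤ W := by
    rw [hWgeom]
    calc (1:ℝ) = ∑ k ∈ Finset.range 1, (r ^ 2) ^ k := by simp
    _ ≤ _ := Finset.sum_le_sum_of_subset_of_nonneg
        (Finset.range_subset_range.mpr hN) (fun i _ _ => by positivity)
  have hWpos : 0 < W := lt_of_lt_of_le one_pos hW1
  have hr2 : (0:ℝ) < 1 - r ^ 2 := by nlinarith
  have hWmul : (1 - r ^ 2) * W = 1 - r ^ (2 * N) := by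
    have := geom_sum_mul (r ^ 2) N
    rw [hWgeom, pow_mul]
    nlinarith [this]
  have hVW : c₂ ^ 2 * (1 - r ^ 2) / (1 - r ^ (2 * N)) = c₂ ^ 2 / W := by
    rw [← hWmul]
    field_simp
  -- key telescoping identity
  have key : ∀ a : ℕ → ℝ, a 0 = 0 → ∀ M : ℕ,
      a M = ∑ n ∈ Finset.range M, r ^ (M - 1 - n) * (a (n + 1) - r * a n) := by
    intro a ha0 M
    induction M with
    | zero => simpa using ha0
    | succ M ih =>
      rw [Finset.sum_range_succ]
      have h1 : ∀ n ∈ Finset.range M,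
          r ^ (M + 1 - 1 - n) * (a (n + 1) - r * a n)
            = r * (r ^ (M - 1 - n) * (a (n + 1) - r * a n)) := by
        intro n hn
        rw [Finset.mem_range] at hn
        rw [← mul_assoc, ← pow_succ']
        congr 2
        omega
      rw [Finset.sum_congr rfl h1, ← Finset.mul_sum, ← ih]
      simp
  -- rewriting each summand
  have hsummand : ∀ (a : ℕ → ℝ) (n : ℕ),
      (c₁ * a n + c₂ * (a (n + 1) - a n)) ^ 2 = c₂ ^ 2 * (a (n + 1) - r * a n) ^ 2 := by
    intro a n
    have : c₁ * a n + c₂ * (a (n + 1) - a n) = c₂ * (a (n + 1) - r * a n) := by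
      have hc : c₂ * (c₁ / c₂) = c₁ := by field_simp
      rw [hr]; linear_combination (-(a n)) * hc
    rw [this, mul_pow]
  -- the optimal value is attained
  have hmem : c₂ ^ 2 / W ∈ {S : ℝ | ∃ a : ℕ → ℝ, a 0 = 0 ∧ a N = 1 ∧
      S = ∑ n ∈ Finset.range N, (c₁ * a n + c₂ * (a (n + 1) - a n)) ^ 2} := by
    set b : ℕ → ℝ := fun n => r ^ (N - 1 - n) / W with hb
    set a : ℕ → ℝ := fun n => Nat.rec 0 (fun n an => r * an + b n) n with ha
    have ha0 : a 0 = 0 := rfl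
    have hstep : ∀ n, a (n + 1) - r * a n = b n := fun n => by simp [ha]
    refine ⟨a, ha0, ?_, ?_⟩
    · rw [key a ha0 N]
      have : ∀ n ∈ Finset.range N,
          r ^ (N - 1 - n) * (a (n + 1) - r * a n) = (r ^ (N - 1 - n)) ^ 2 / W := by
        intro n _
        rw [hstep, hb]
        ring
      rw [Finset.sum_congr rfl this, ← Finset.sum_div, ← hWdef, div_self hWpos.ne']
    · have : ∀ n ∈ Finset.range N,
          (c₁ * a n + c₂ * (a (n + 1) - a n)) ^ 2
            = c₂ ^ 2 / W ^ 2 * (r ^ (N - 1 - n)) ^ 2 := by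
        intro n _
        rw [hsummand a n, hstep, hb]
        ring
      rw [Finset.sum_congr rfl this, ← Finset.mul_sum, ← hWdef]
      field_simp
  rw [hVW]
  apply le_antisymm
  · exact csInf_le
      ⟨0, fun x ⟨a, _, _, hx⟩ => hx ▸ Finset.sum_nonneg fun i _ => sq_nonneg _⟩ hmem
  · -- lower bound via Cauchy–Schwarz
    apply le_csInf ⟨_, hmem⟩
    rintro S ⟨a, ha0, haN, hS⟩
    set b : ℕ → ℝ := fun n => a (n + 1) - r * a n with hb
    have hCS := Finset.sum_mul_sq_le_sq_mul_sq (Finset.range N)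
      (fun n => r ^ (N - 1 - n)) b
    have h1 : (∑ n ∈ Finset.range N, r ^ (N - 1 - n) * b n) = 1 := by
      rw [← key a ha0 N, haN]
    rw [h1, one_pow, ← hWdef] at hCS
    have hsum : S = c₂ ^ 2 * ∑ n ∈ Finset.range N, b n ^ 2 := by
      rw [hS, Finset.mul_sum]
      exact Finset.sum_congr rfl fun n _ => hsummand a n
    rw [hsum, div_le_iff₀ hWpos]
    nlinarith [sq_nonneg c₂]
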